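/- arXiv:math/0602465 — 3 statements merged into one kernel-verified Lean document; each statement's English description precedes it below -/
import Mathlib

section
/- Let x, y, z ∈ L³([0,1]) and define X_t = ∫₀ᵗ x_s ds, Y_t = ∫₀ᵗ y_s ds. With X_r^{(n)} = X_r − X_{n(r)} and n(s) = ⌊ns⌋/n, one has for every n ≥ 1 and t ∈ [0,1]: n² |∫₀ᵗ (∫_{n(s)}^{s} X_r^{(n)} y_r dr) z_s ds| ≤ ‖x‖₃ ‖y‖₃ ‖z‖₃. -/
open MeasureTheory Filter
open scoped ENNReal

/-- `nfl n s = ⌊n s⌋ / n`, the left endpoint of the partition interval containing `s`. -/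
noncomputable def nfl (n : ℕ) (s : ℝ) : ℝ := (⌊(n : ℝ) * s⌋ : ℝ) / n

private lemma sum3holder (m : ℕ) (a b c : ℕ → ℝ) (ha : ∀ i, 0 ≤ a i) (hb : ∀ i, 0 ≤ b i)
    (hc : ∀ i, 0 ≤ c i) :
    ∑ k ∈ Finset.range m, a k * b k * c k ≤
      (∑ k ∈ Finset.range m, a k ^ (3:ℝ)) ^ ((1:ℝ)/3) *
      (∑ k ∈ Finset.range m, b k ^ (3:ℝ)) ^ ((1:ℝ)/3) *
      (∑ k ∈ Finset.range m, c k ^ (3:ℝ)) ^ ((1:ℝ)/3) := by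
  have hpq1 : Real.HolderConjugate (3/2) 3 := by constructor <;> norm_num
  have hpq2 : Real.HolderConjugate 2 2 := by constructor <;> norm_num
  have h1 := Real.inner_le_Lp_mul_Lq_of_nonneg (Finset.range m) (f := fun k => a k * b k)
    (g := c) hpq1 (fun i _ => mul_nonneg (ha i) (hb i)) (fun i _ => hc i)
  have h2 := Real.inner_le_Lp_mul_Lq_of_nonneg (Finset.range m)
    (f := fun k => a k ^ ((3:ℝ)/2)) (g := fun k => b k ^ ((3:ℝ)/2)) hpq2
    (fun i _ => Real.rpow_nonneg (ha i) _) (fun i _ => Real.rpow_nonneg (hb i) _)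
  have hab : ∀ k, (a k * b k) ^ ((3:ℝ)/2) = a k ^ ((3:ℝ)/2) * b k ^ ((3:ℝ)/2) := fun k =>
    Real.mul_rpow (ha k) (hb k)
  have hSa : ∀ k, (a k ^ ((3:ℝ)/2)) ^ (2:ℝ) = a k ^ (3:ℝ) := fun k => by
    rw [← Real.rpow_mul (ha k)]; norm_num
  have hSb : ∀ k, (b k ^ ((3:ℝ)/2)) ^ (2:ℝ) = b k ^ (3:ℝ) := fun k => by
    rw [← Real.rpow_mul (hb k)]; norm_num
  simp only [hab, hSa, hSb] at h2
  -- sums nonneg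
  have hSa' : 0 ≤ ∑ k ∈ Finset.range m, a k ^ (3:ℝ) :=
    Finset.sum_nonneg fun i _ => Real.rpow_nonneg (ha i) _
  have hSb' : 0 ≤ ∑ k ∈ Finset.range m, b k ^ (3:ℝ) :=
    Finset.sum_nonneg fun i _ => Real.rpow_nonneg (hb i) _
  have h3 : (∑ k ∈ Finset.range m, (a k * b k) ^ ((3:ℝ)/2)) ^ ((1:ℝ)/(3/2))
      ≤ (∑ k ∈ Finset.range m, a k ^ (3:ℝ)) ^ ((1:ℝ)/3) *
        (∑ k ∈ Finset.range m, b k ^ (3:ℝ)) ^ ((1:ℝ)/3) := by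
    simp only [hab]
    calc (∑ k ∈ Finset.range m, a k ^ ((3:ℝ)/2) * b k ^ ((3:ℝ)/2)) ^ ((1:ℝ)/(3/2))
        ≤ ((∑ k ∈ Finset.range m, a k ^ (3:ℝ)) ^ ((1:ℝ)/2) *
           (∑ k ∈ Finset.range m, b k ^ (3:ℝ)) ^ ((1:ℝ)/2)) ^ ((1:ℝ)/(3/2)) := by
          apply Real.rpow_le_rpow (Finset.sum_nonneg fun i _ =>
            mul_nonneg (Real.rpow_nonneg (ha i) _) (Real.rpow_nonneg (hb i) _)) h2 (by norm_num)
      _ = (∑ k ∈ Finset.range m, a k ^ (3:ℝ)) ^ ((1:ℝ)/3) *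
          (∑ k ∈ Finset.range m, b k ^ (3:ℝ)) ^ ((1:ℝ)/3) := by
          rw [Real.mul_rpow (Real.rpow_nonneg hSa' _) (Real.rpow_nonneg hSb' _),
            ← Real.rpow_mul hSa', ← Real.rpow_mul hSb']
          norm_num
  calc ∑ k ∈ Finset.range m, a k * b k * c k
      ≤ (∑ k ∈ Finset.range m, (a k * b k) ^ ((3:ℝ)/2)) ^ ((1:ℝ)/(3/2)) *
        (∑ k ∈ Finset.range m, c k ^ (3:ℝ)) ^ ((1:ℝ)/3) := h1
    _ ≤ _ := by
        apply mul_le_mul_of_nonneg_right h3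
        exact Real.rpow_nonneg (Finset.sum_nonneg fun i _ => Real.rpow_nonneg (hc i) _) _

private lemma holder13 {f : ℝ → ℝ} (hf : Measurable f) {a b : ℝ} (hab : a ≤ b)
    (h3 : IntegrableOn (fun s => |f s| ^ 3) (Set.Ioc a b)) :
    ∫ s in Set.Ioc a b, |f s| ≤
      (b - a) ^ ((2:ℝ)/3) * (∫ s in Set.Ioc a b, |f s| ^ 3) ^ ((1:ℝ)/3) := by
  set μ := volume.restrict (Set.Ioc a b) with hμ
  haveI : IsFiniteMeasure μ := by
    constructor
    rw [hμ, Measure.restrict_apply_univ]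
    exact measure_Ioc_lt_top
  have hpq : Real.HolderConjugate 3 (3/2) := by constructor <;> norm_num
  have hmf : MemLp f 3 μ := by
    rw [← memLp_norm_rpow_iff (q := 3) hf.aestronglyMeasurable (by norm_num) (by norm_num)]
    have h33 : (3 : ℝ≥0∞) / 3 = 1 := by
      rw [ENNReal.div_self] <;> norm_num
    rw [h33, memLp_one_iff_integrable]
    have : (fun x : ℝ => ‖f x‖ ^ (3:ℝ≥0∞).toReal) = fun s => |f s| ^ 3 := by
      funext s
      rw [Real.norm_eq_abs]
      rw [show (3:ℝ≥0∞).toReal = ((3:ℕ):ℝ) by norm_num, Real.rpow_natCast]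
    rw [this]
    exact h3
  have hmf' : MemLp (fun s => |f s|) (ENNReal.ofReal 3) μ := by
    have : ENNReal.ofReal (3:ℝ) = 3 := by
      rw [show (3:ℝ) = ((3:ℕ):ℝ) by norm_num, ENNReal.ofReal_natCast]; norm_num
    rw [this]
    exact hmf.abs
  have hmg : MemLp (fun _ : ℝ => (1:ℝ)) (ENNReal.ofReal (3/2)) μ := memLp_const 1
  have H := integral_mul_le_Lp_mul_Lq_of_nonneg hpq (f := fun s => |f s|) (g := fun _ => 1)
    (Eventually.of_forall fun s => abs_nonneg _) (Eventually.of_forall fun _ => zero_le_one)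
    hmf' hmg
  simp only [mul_one] at H
  have h1 : ∫ s, (1:ℝ) ^ (3/2 : ℝ) ∂μ = b - a := by
    simp [hμ, Real.volume_Ioc, ENNReal.toReal_ofReal (sub_nonneg.2 hab), hab]
  have h2 : ∫ s, |f s| ^ (3:ℝ) ∂μ = ∫ s in Set.Ioc a b, |f s| ^ 3 := by
    rw [hμ]
    congr 1
    funext s
    rw [show (3:ℝ) = ((3:ℕ):ℝ) by norm_num, Real.rpow_natCast]
  rw [h1, h2] at H
  calc ∫ s in Set.Ioc a b, |f s| = ∫ s, |f s| ∂μ := rfl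
    _ ≤ (∫ s in Set.Ioc a b, |f s| ^ 3) ^ ((1:ℝ)/3) * (b - a) ^ ((1:ℝ)/(3/2)) := H
    _ = (b - a) ^ ((2:ℝ)/3) * (∫ s in Set.Ioc a b, |f s| ^ 3) ^ ((1:ℝ)/3) := by
        rw [mul_comm]; norm_num
private lemma inner_bound (x y X : ℝ → ℝ)
    (hxI : IntegrableOn x (Set.Icc (0:ℝ) 1))
    (hyI : IntegrableOn (fun r => |y r|) (Set.Icc (0:ℝ) 1))
    (hX : ∀ t, X t = ∫ s in (0:ℝ)..t, x s)
    (n : ℕ) (hn : 1 ≤ n) (s : ℝ) (hs0 : 0 < s) (hs1 : s < 1)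
    (κ : ℕ) (hκ : (κ:ℤ) = ⌊(n:ℝ)*s⌋) (hκn : κ < n) :
    |∫ r in (nfl n s)..s, (X r - X (nfl n r)) * y r| ≤
      (∫ r in Set.Ioc ((κ:ℝ)/n) (((κ:ℝ)+1)/n), |x r|) *
        ∫ r in Set.Ioc ((κ:ℝ)/n) (((κ:ℝ)+1)/n), |y r| := by
  have hn0 : (0:ℝ) < n := by exact_mod_cast Nat.pos_of_ne_zero (by omega)
  have hκR : (κ:ℝ) = ((⌊(n:ℝ)*s⌋ : ℤ) : ℝ) := by exact_mod_cast hκ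
  have hκs : (κ:ℝ)/n ≤ s := by
    rw [div_le_iff₀ hn0, hκR, mul_comm]
    exact Int.floor_le _
  have hsκ : s < ((κ:ℝ)+1)/n := by
    rw [lt_div_iff₀ hn0, hκR, mul_comm]
    exact Int.lt_floor_add_one _
  have hnfl : nfl n s = (κ:ℝ)/n := by rw [nfl, ← hκR]
  have hknn : (0:ℝ) ≤ (κ:ℝ)/n := by positivity
  have hk1 : ((κ:ℝ)+1)/n ≤ 1 := by
    rw [div_le_one hn0]
    exact_mod_cast Nat.succ_le_of_lt hκn
  have hIcc : Set.Icc ((κ:ℝ)/n) (((κ:ℝ)+1)/n) ⊆ Set.Icc 0 1 :=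
    Set.Icc_subset_Icc hknn hk1
  -- floor is constant on [κ/n, s]
  have hfloor : ∀ r ∈ Set.Icc ((κ:ℝ)/n) s, nfl n r = (κ:ℝ)/n := by
    intro r hr
    have h1 : (κ:ℝ) ≤ (n:ℝ)*r := by
      rw [mul_comm]
      exact (div_le_iff₀ hn0).mp hr.1
    have h2 : (n:ℝ)*r < (κ:ℝ)+1 := by
      have : (n:ℝ)*r ≤ (n:ℝ)*s := mul_le_mul_of_nonneg_left hr.2 hn0.le
      have h3 : (n:ℝ)*s < (κ:ℝ)+1 := by
        rw [lt_div_iff₀ hn0, mul_comm] at hsκ; linarith [hsκ]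
      linarith
    have hfl : ⌊(n:ℝ)*r⌋ = (κ:ℤ) := by
      rw [Int.floor_eq_iff]
      constructor
      · push_cast; exact h1
      · push_cast; exact h2
    rw [nfl, hfl]
    push_cast; ring
  set c : ℝ := X ((κ:ℝ)/n) with hc
  have hcong : (∫ r in (nfl n s)..s, (X r - X (nfl n r)) * y r)
      = ∫ r in ((κ:ℝ)/n)..s, (X r - c) * y r := by
    rw [hnfl]
    apply intervalIntegral.integral_congr
    intro r hr
    rw [Set.uIcc_of_le hκs] at hr
    show (X r - X (nfl n r)) * y r = (X r - c) * y r
    rw [hfloor r hr]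
  set P : ℝ := ∫ r in Set.Ioc ((κ:ℝ)/n) (((κ:ℝ)+1)/n), |x r| with hPdef
  have hxa : IntegrableOn (fun r => |x r|) (Set.Icc ((κ:ℝ)/n) (((κ:ℝ)+1)/n)) :=
    IntegrableOn.mono_set hxI.abs hIcc
  have hya : IntegrableOn (fun r => |y r|) (Set.Ioc ((κ:ℝ)/n) (((κ:ℝ)+1)/n)) :=
    hyI.mono_set (Set.Ioc_subset_Icc_self.trans hIcc)
  have hPnn : 0 ≤ P := setIntegral_nonneg measurableSet_Ioc fun r _ => abs_nonneg _
  have hXsub : ∀ r ∈ Set.Ioc ((κ:ℝ)/n) s, |X r - c| ≤ P := by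
    intro r hr
    have hrs : r ≤ s := hr.2
    have hr1 : r ≤ ((κ:ℝ)+1)/n := hrs.trans hsκ.le
    have hr0 : 0 ≤ r := hknn.trans hr.1.le
    have hXr : X r - c = ∫ u in ((κ:ℝ)/n)..r, x u := by
      rw [hc, hX, hX]
      apply intervalIntegral.integral_interval_sub_left
      · apply IntegrableOn.intervalIntegrable
        rw [Set.uIcc_of_le hr0]
        exact hxI.mono_set (Set.Icc_subset_Icc le_rfl (hrs.trans hs1.le))
      · apply IntegrableOn.intervalIntegrable
        rw [Set.uIcc_of_le hknn]
        exact hxI.mono_set (Set.Icc_subset_Icc le_rfl (hκs.trans hs1.le))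
    rw [hXr]
    calc |∫ u in ((κ:ℝ)/n)..r, x u| ≤ ∫ u in ((κ:ℝ)/n)..r, |x u| :=
          intervalIntegral.abs_integral_le_integral_abs hr.1.le
      _ ≤ ∫ u in ((κ:ℝ)/n)..(((κ:ℝ)+1)/n), |x u| := by
          apply intervalIntegral.integral_mono_interval le_rfl hr.1.le hr1
          · exact Eventually.of_forall fun u => abs_nonneg _
          · apply IntegrableOn.intervalIntegrable
            rw [Set.uIcc_of_le (hκs.trans hsκ.le)]
            exact hxa
      _ = P := intervalIntegral.integral_of_le (hκs.trans hsκ.le)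
  calc |∫ r in (nfl n s)..s, (X r - X (nfl n r)) * y r|
      = |∫ r in ((κ:ℝ)/n)..s, (X r - c) * y r| := by rw [hcong]
    _ ≤ ∫ r in ((κ:ℝ)/n)..s, |(X r - c) * y r| :=
        intervalIntegral.abs_integral_le_integral_abs hκs
    _ = ∫ r in Set.Ioc ((κ:ℝ)/n) s, |(X r - c) * y r| :=
        intervalIntegral.integral_of_le hκs
    _ ≤ ∫ r in Set.Ioc ((κ:ℝ)/n) s, P * |y r| := by
        apply integral_mono_of_nonneg (Eventually.of_forall fun r => abs_nonneg _)
        · exact (hya.mono_set (Set.Ioc_subset_Ioc_right hsκ.le)).const_mul P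
        · filter_upwards [ae_restrict_mem measurableSet_Ioc] with r hr
          rw [abs_mul]
          exact mul_le_mul_of_nonneg_right (hXsub r hr) (abs_nonneg _)
    _ = P * ∫ r in Set.Ioc ((κ:ℝ)/n) s, |y r| := integral_const_mul P _
    _ ≤ P * ∫ r in Set.Ioc ((κ:ℝ)/n) (((κ:ℝ)+1)/n), |y r| := by
        apply mul_le_mul_of_nonneg_left _ hPnn
        apply setIntegral_mono_set hya (Eventually.of_forall fun r => abs_nonneg _)
        exact (Set.Ioc_subset_Ioc_right hsκ.le).eventuallyLE

private lemma abs_le_one_add_cube (u : ℝ) : |u| ≤ 1 + |u| ^ 3 := by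
  nlinarith [abs_nonneg u, sq_nonneg (|u| - 1), sq_nonneg (|u| + 1), sq_nonneg u]

private lemma integrableOn_of_cube {f : ℝ → ℝ} (hf : Measurable f)
    (h3 : IntegrableOn (fun s => |f s| ^ 3) (Set.Icc (0:ℝ) 1)) :
    IntegrableOn f (Set.Icc (0:ℝ) 1) := by
  refine Integrable.mono' ((integrable_const (1:ℝ)).add h3) hf.aestronglyMeasurable.restrict ?_
  filter_upwards with s
  rw [Real.norm_eq_abs]
  exact abs_le_one_add_cube (f s)

/-- For `x, y, z ∈ L³([0,1])`, `X_t = ∫₀ᵗ x_s ds`, with `X_r^{(n)} = X_r − X_{n(r)}`,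
one has for every `n ≥ 1` and `t ∈ [0,1]`:
`n² |∫₀ᵗ (∫_{n(s)}^{s} X_r^{(n)} y_r dr) z_s ds| ≤ ‖x‖₃ ‖y‖₃ ‖z‖₃`. -/
theorem stmt_3 (x y z : ℝ → ℝ) (hx : Measurable x) (hy : Measurable y) (hz : Measurable z)
    (hx3 : IntegrableOn (fun s => |x s| ^ 3) (Set.Icc (0 : ℝ) 1))
    (hy3 : IntegrableOn (fun s => |y s| ^ 3) (Set.Icc (0 : ℝ) 1))
    (hz3 : IntegrableOn (fun s => |z s| ^ 3) (Set.Icc (0 : ℝ) 1))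
    (X : ℝ → ℝ) (hX : ∀ t, X t = ∫ s in (0 : ℝ)..t, x s)
    (n : ℕ) (hn : 1 ≤ n) (t : ℝ) (ht : t ∈ Set.Icc (0 : ℝ) 1) :
    (n : ℝ) ^ 2 * |∫ s in (0 : ℝ)..t, (∫ r in (nfl n s)..s, (X r - X (nfl n r)) * y r) * z s|
      ≤ (∫ s in (0 : ℝ)..1, |x s| ^ 3) ^ ((1 : ℝ) / 3)
        * (∫ s in (0 : ℝ)..1, |y s| ^ 3) ^ ((1 : ℝ) / 3)
        * (∫ s in (0 : ℝ)..1, |z s| ^ 3) ^ ((1 : ℝ) / 3) := by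
  obtain ⟨ht0, ht1⟩ := ht
  have hn0 : (0:ℝ) < n := by exact_mod_cast Nat.pos_of_ne_zero (by omega)
  have hnne : (n:ℝ) ≠ 0 := ne_of_gt hn0
  have hxI := integrableOn_of_cube hx hx3
  have hyI := integrableOn_of_cube hy hy3
  have hzI := integrableOn_of_cube hz hz3
  have hxa : IntegrableOn (fun r => |x r|) (Set.Icc (0:ℝ) 1) := hxI.abs
  have hya : IntegrableOn (fun r => |y r|) (Set.Icc (0:ℝ) 1) := hyI.abs
  have hza : IntegrableOn (fun r => |z r|) (Set.Icc (0:ℝ) 1) := hzI.abs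
  set pt : ℕ → ℝ := fun k => (k:ℝ)/n with hptdef
  have hpt1 : ∀ k : ℕ, pt (k+1) = ((k:ℝ)+1)/(n:ℝ) := fun k => by simp [hptdef]
  have hptle : ∀ k : ℕ, pt k ≤ pt (k+1) := by
    intro k
    rw [hpt1]
    show (k:ℝ)/n ≤ _
    gcongr <;> linarith
  have hpt0 : pt 0 = 0 := by simp [hptdef]
  have hptn : pt n = 1 := by
    simp only [hptdef]
    field_simp
  have hptnn : ∀ k : ℕ, 0 ≤ pt k := fun k => by simp only [hptdef]; positivity
  have hptub : ∀ k : ℕ, k < n → pt (k+1) ≤ 1 := by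
    intro k hk
    rw [hpt1, div_le_one hn0]
    exact_mod_cast Nat.succ_le_of_lt hk
  have hsub : ∀ k : ℕ, k < n → Set.Icc (pt k) (pt (k+1)) ⊆ Set.Icc 0 1 := fun k hk =>
    Set.Icc_subset_Icc (hptnn k) (hptub k hk)
  set P : ℕ → ℝ := fun k => ∫ r in Set.Ioc (pt k) (pt (k+1)), |x r| with hPdef
  set Q : ℕ → ℝ := fun k => ∫ r in Set.Ioc (pt k) (pt (k+1)), |y r| with hQdef
  set R : ℕ → ℝ := fun k => ∫ r in Set.Ioc (pt k) (pt (k+1)), |z r| with hRdef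
  set A3 : ℕ → ℝ := fun k => ∫ r in Set.Ioc (pt k) (pt (k+1)), |x r| ^ 3 with hA3def
  set B3 : ℕ → ℝ := fun k => ∫ r in Set.Ioc (pt k) (pt (k+1)), |y r| ^ 3 with hB3def
  set C3 : ℕ → ℝ := fun k => ∫ r in Set.Ioc (pt k) (pt (k+1)), |z r| ^ 3 with hC3def
  have hPnn : ∀ k, 0 ≤ P k := fun k =>
    setIntegral_nonneg measurableSet_Ioc fun r _ => abs_nonneg _
  have hQnn : ∀ k, 0 ≤ Q k := fun k =>
    setIntegral_nonneg measurableSet_Ioc fun r _ => abs_nonneg _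
  have hRnn : ∀ k, 0 ≤ R k := fun k =>
    setIntegral_nonneg measurableSet_Ioc fun r _ => abs_nonneg _
  have hA3nn : ∀ k, 0 ≤ A3 k := fun k =>
    setIntegral_nonneg measurableSet_Ioc fun r _ => by positivity
  have hB3nn : ∀ k, 0 ≤ B3 k := fun k =>
    setIntegral_nonneg measurableSet_Ioc fun r _ => by positivity
  have hC3nn : ∀ k, 0 ≤ C3 k := fun k =>
    setIntegral_nonneg measurableSet_Ioc fun r _ => by positivity
  have hdiff : ∀ k : ℕ, pt (k+1) - pt k = 1/(n:ℝ) := by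
    intro k
    rw [hpt1]
    simp only [hptdef]
    rw [div_sub_div_same]
    norm_num
  have hPle : ∀ k, k < n → P k ≤ ((1:ℝ)/n) ^ ((2:ℝ)/3) * (A3 k) ^ ((1:ℝ)/3) := by
    intro k hk
    have h := holder13 hx (hptle k)
      (IntegrableOn.mono_set hx3 (Set.Ioc_subset_Icc_self.trans (hsub k hk)))
    rwa [hdiff k] at h
  have hQle : ∀ k, k < n → Q k ≤ ((1:ℝ)/n) ^ ((2:ℝ)/3) * (B3 k) ^ ((1:ℝ)/3) := by
    intro k hk
    have h := holder13 hy (hptle k)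
      (IntegrableOn.mono_set hy3 (Set.Ioc_subset_Icc_self.trans (hsub k hk)))
    rwa [hdiff k] at h
  have hRle : ∀ k, k < n → R k ≤ ((1:ℝ)/n) ^ ((2:ℝ)/3) * (C3 k) ^ ((1:ℝ)/3) := by
    intro k hk
    have h := holder13 hz (hptle k)
      (IntegrableOn.mono_set hz3 (Set.Ioc_subset_Icc_self.trans (hsub k hk)))
    rwa [hdiff k] at h
  -- the dominating step function
  set G : ℝ → ℝ := fun s => ∑ k ∈ Finset.range n,
      Set.indicator (Set.Ico (pt k) (pt (k+1))) (fun u => P k * Q k * |z u|) s with hGdef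
  have hGnn : ∀ s, 0 ≤ G s := by
    intro s
    apply Finset.sum_nonneg
    intro k _
    apply Set.indicator_nonneg
    intro u _
    have h1 := hPnn k
    have h2 := hQnn k
    positivity
  have hGint : IntegrableOn G (Set.Ioc (0:ℝ) 1) := by
    apply integrable_finset_sum
    intro k _
    exact Integrable.indicator
      ((IntegrableOn.mono_set hza Set.Ioc_subset_Icc_self).const_mul (P k * Q k))
      measurableSet_Ico
  have hne1 : ∀ᵐ (s:ℝ), s ≠ 1 := by
    rw [ae_iff]
    have h : {s : ℝ | ¬ s ≠ 1} = {1} := by ext u; simp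
    rw [h]
    exact measure_singleton 1
  -- pointwise bound
  have hbound : ∀ᵐ s ∂(volume.restrict (Set.Ioc (0:ℝ) t)),
      |(∫ r in (nfl n s)..s, (X r - X (nfl n r)) * y r) * z s| ≤ G s := by
    filter_upwards [ae_restrict_mem measurableSet_Ioc, ae_restrict_of_ae hne1] with s hs hs1
    have hs0 : 0 < s := hs.1
    have hslt1 : s < 1 := lt_of_le_of_ne (hs.2.trans ht1) hs1
    set κ : ℕ := (⌊(n:ℝ)*s⌋).toNat with hκdef
    have hfl0 : (0:ℤ) ≤ ⌊(n:ℝ)*s⌋ := Int.floor_nonneg.2 (by positivity)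
    have hκ : (κ:ℤ) = ⌊(n:ℝ)*s⌋ := Int.toNat_of_nonneg hfl0
    have hκR : (κ:ℝ) = ((⌊(n:ℝ)*s⌋:ℤ):ℝ) := by exact_mod_cast hκ
    have hκn : κ < n := by
      have h1 : ⌊(n:ℝ)*s⌋ < (n:ℤ) := by
        apply Int.floor_lt.2
        push_cast
        nlinarith
      omega
    have hκs : pt κ ≤ s := by
      simp only [hptdef]
      rw [div_le_iff₀ hn0, hκR, mul_comm]
      exact Int.floor_le _
    have hsκ : s < pt (κ+1) := by
      rw [hpt1, lt_div_iff₀ hn0, hκR, mul_comm]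
      exact Int.lt_floor_add_one _
    have hinner := inner_bound x y X hxI hya hX n hn s hs0 hslt1 κ hκ hκn
    have hPκ : P κ = ∫ r in Set.Ioc ((κ:ℝ)/n) (((κ:ℝ)+1)/n), |x r| := by
      simp only [hPdef, hptdef]
      norm_num
    have hQκ : Q κ = ∫ r in Set.Ioc ((κ:ℝ)/n) (((κ:ℝ)+1)/n), |y r| := by
      simp only [hQdef, hptdef]
      norm_num
    rw [← hPκ, ← hQκ] at hinner
    have hGeval : G s = P κ * Q κ * |z s| := by
      simp only [hGdef]
      rw [Finset.sum_eq_single_of_mem κ (Finset.mem_range.2 hκn)]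
      · exact Set.indicator_of_mem (Set.mem_Ico.2 ⟨hκs, hsκ⟩) (fun u => P κ * Q κ * |z u|)
      · intro j _ hjne
        apply Set.indicator_of_notMem
        intro hmem
        apply hjne
        have hj1 : (j:ℝ) ≤ (n:ℝ)*s := by
          have := hmem.1
          simp only [hptdef] at this
          rw [div_le_iff₀ hn0, mul_comm] at this
          exact this
        have hj2 : (n:ℝ)*s < (j:ℝ)+1 := by
          have := hmem.2
          rw [hpt1, lt_div_iff₀ hn0, mul_comm] at this
          exact this
        have hfl : ⌊(n:ℝ)*s⌋ = (j:ℤ) := by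
          rw [Int.floor_eq_iff]
          constructor
          · push_cast; exact hj1
          · push_cast; exact hj2
        omega
    calc |(∫ r in (nfl n s)..s, (X r - X (nfl n r)) * y r) * z s|
        = |∫ r in (nfl n s)..s, (X r - X (nfl n r)) * y r| * |z s| := abs_mul _ _
      _ ≤ P κ * Q κ * |z s| :=
          mul_le_mul_of_nonneg_right hinner (abs_nonneg _)
      _ = G s := hGeval.symm
  -- integral of G over the partition
  have hIcoIoc : ∀ k : ℕ, k < n →
      (Set.Ico (pt k) (pt (k+1)) ∩ Set.Ioc 0 1 : Set ℝ) =ᵐ[volume]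
        (Set.Ioc (pt k) (pt (k+1)) : Set ℝ) := by
    intro k hk
    rw [MeasureTheory.ae_eq_set]
    constructor
    · refine measure_mono_null ?_ (measure_singleton (pt k))
      rintro u ⟨⟨⟨h1, h2⟩, _⟩, h4⟩
      simp only [Set.mem_Ioc, not_and, not_le] at h4
      rcases lt_or_ge (pt k) u with h | h
      · exact absurd (h4 h) (not_lt.2 h2.le)
      · exact le_antisymm h h1
    · refine measure_mono_null ?_ (measure_singleton (pt (k+1)))
      rintro u ⟨⟨h1, h2⟩, h3⟩
      simp only [Set.mem_inter_iff, Set.mem_Ico, Set.mem_Ioc, not_and, not_lt] at h3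
      have hu0 : 0 < u := lt_of_le_of_lt (hptnn k) h1
      have hu1 : u ≤ 1 := h2.trans (hptub k hk)
      rcases lt_or_ge u (pt (k+1)) with h | h
      · exact absurd hu1 (h3 ⟨h1.le, h⟩ hu0)
      · exact le_antisymm h2 h
  have hGsum : ∫ s in Set.Ioc (0:ℝ) 1, G s = ∑ k ∈ Finset.range n, P k * Q k * R k := by
    simp only [hGdef]
    rw [integral_finset_sum]
    · apply Finset.sum_congr rfl
      intro k hk
      rw [Finset.mem_range] at hk
      rw [integral_indicator measurableSet_Ico, Measure.restrict_restrict measurableSet_Ico,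
        setIntegral_congr_set (hIcoIoc k hk), integral_const_mul]
    · intro k _
      exact Integrable.indicator
        ((IntegrableOn.mono_set hza Set.Ioc_subset_Icc_self).const_mul (P k * Q k))
        measurableSet_Ico
  -- sums of cubes over the partition
  have hsumx : ∑ k ∈ Finset.range n, A3 k = ∫ s in (0:ℝ)..1, |x s| ^ 3 := by
    have h := intervalIntegral.sum_integral_adjacent_intervals (a := pt) (μ := volume)
      (f := fun s => |x s| ^ 3) (n := n) (fun k hk => by
        apply IntegrableOn.intervalIntegrable
        rw [Set.uIcc_of_le (hptle k)]
        exact IntegrableOn.mono_set hx3 (hsub k hk))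
    rw [hpt0, hptn] at h
    rw [← h]
    exact Finset.sum_congr rfl fun k _ =>
      (intervalIntegral.integral_of_le (hptle k)).symm
  have hsumy : ∑ k ∈ Finset.range n, B3 k = ∫ s in (0:ℝ)..1, |y s| ^ 3 := by
    have h := intervalIntegral.sum_integral_adjacent_intervals (a := pt) (μ := volume)
      (f := fun s => |y s| ^ 3) (n := n) (fun k hk => by
        apply IntegrableOn.intervalIntegrable
        rw [Set.uIcc_of_le (hptle k)]
        exact IntegrableOn.mono_set hy3 (hsub k hk))
    rw [hpt0, hptn] at h
    rw [← h]
    exact Finset.sum_congr rfl fun k _ =>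
      (intervalIntegral.integral_of_le (hptle k)).symm
  have hsumz : ∑ k ∈ Finset.range n, C3 k = ∫ s in (0:ℝ)..1, |z s| ^ 3 := by
    have h := intervalIntegral.sum_integral_adjacent_intervals (a := pt) (μ := volume)
      (f := fun s => |z s| ^ 3) (n := n) (fun k hk => by
        apply IntegrableOn.intervalIntegrable
        rw [Set.uIcc_of_le (hptle k)]
        exact IntegrableOn.mono_set hz3 (hsub k hk))
    rw [hpt0, hptn] at h
    rw [← h]
    exact Finset.sum_congr rfl fun k _ =>
      (intervalIntegral.integral_of_le (hptle k)).symm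
  set Sx : ℝ := ∫ s in (0:ℝ)..1, |x s| ^ 3 with hSxdef
  set Sy : ℝ := ∫ s in (0:ℝ)..1, |y s| ^ 3 with hSydef
  set Sz : ℝ := ∫ s in (0:ℝ)..1, |z s| ^ 3 with hSzdef
  have hSxnn : 0 ≤ Sx := hsumx ▸ Finset.sum_nonneg fun k _ => hA3nn k
  have hSynn : 0 ≤ Sy := hsumy ▸ Finset.sum_nonneg fun k _ => hB3nn k
  have hSznn : 0 ≤ Sz := hsumz ▸ Finset.sum_nonneg fun k _ => hC3nn k
  -- discrete Hölder
  have hsimpA : ∀ k : ℕ, ((A3 k) ^ ((1:ℝ)/3)) ^ (3:ℝ) = A3 k := fun k => by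
    rw [← Real.rpow_mul (hA3nn k)]; norm_num
  have hsimpB : ∀ k : ℕ, ((B3 k) ^ ((1:ℝ)/3)) ^ (3:ℝ) = B3 k := fun k => by
    rw [← Real.rpow_mul (hB3nn k)]; norm_num
  have hsimpC : ∀ k : ℕ, ((C3 k) ^ ((1:ℝ)/3)) ^ (3:ℝ) = C3 k := fun k => by
    rw [← Real.rpow_mul (hC3nn k)]; norm_num
  have hs3 := sum3holder n (fun k => (A3 k) ^ ((1:ℝ)/3)) (fun k => (B3 k) ^ ((1:ℝ)/3))
    (fun k => (C3 k) ^ ((1:ℝ)/3)) (fun k => Real.rpow_nonneg (hA3nn k) _)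
    (fun k => Real.rpow_nonneg (hB3nn k) _) (fun k => Real.rpow_nonneg (hC3nn k) _)
  simp only [hsimpA, hsimpB, hsimpC] at hs3
  rw [hsumx, hsumy, hsumz] at hs3
  -- powers of 1/n
  have hpow : ((1:ℝ)/n) ^ ((2:ℝ)/3) * ((1:ℝ)/n) ^ ((2:ℝ)/3) * ((1:ℝ)/n) ^ ((2:ℝ)/3)
      = ((1:ℝ)/n) ^ 2 := by
    rw [← Real.rpow_add (by positivity), ← Real.rpow_add (by positivity)]
    rw [show (2:ℝ)/3 + 2/3 + 2/3 = ((2:ℕ):ℝ) by norm_num, Real.rpow_natCast]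
  -- per-interval product bound
  have hterm : ∀ k, k < n → P k * Q k * R k ≤
      ((1:ℝ)/n) ^ 2 * ((A3 k) ^ ((1:ℝ)/3) * (B3 k) ^ ((1:ℝ)/3) * (C3 k) ^ ((1:ℝ)/3)) := by
    intro k hk
    calc P k * Q k * R k
        ≤ (((1:ℝ)/n) ^ ((2:ℝ)/3) * (A3 k) ^ ((1:ℝ)/3))
            * (((1:ℝ)/n) ^ ((2:ℝ)/3) * (B3 k) ^ ((1:ℝ)/3))
            * (((1:ℝ)/n) ^ ((2:ℝ)/3) * (C3 k) ^ ((1:ℝ)/3)) := by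
          apply mul_le_mul (mul_le_mul (hPle k hk) (hQle k hk) (hQnn k) (by positivity))
            (hRle k hk) (hRnn k)
          positivity
      _ = (((1:ℝ)/n) ^ ((2:ℝ)/3) * ((1:ℝ)/n) ^ ((2:ℝ)/3) * ((1:ℝ)/n) ^ ((2:ℝ)/3))
            * ((A3 k) ^ ((1:ℝ)/3) * (B3 k) ^ ((1:ℝ)/3) * (C3 k) ^ ((1:ℝ)/3)) := by ring
      _ = ((1:ℝ)/n) ^ 2 * ((A3 k) ^ ((1:ℝ)/3) * (B3 k) ^ ((1:ℝ)/3) * (C3 k) ^ ((1:ℝ)/3)) := by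
          rw [hpow]
  -- the main chain
  have hmain : |∫ s in (0:ℝ)..t, (∫ r in (nfl n s)..s, (X r - X (nfl n r)) * y r) * z s|
      ≤ ((1:ℝ)/n) ^ 2 * (Sx ^ ((1:ℝ)/3) * Sy ^ ((1:ℝ)/3) * Sz ^ ((1:ℝ)/3)) := by
    calc |∫ s in (0:ℝ)..t, (∫ r in (nfl n s)..s, (X r - X (nfl n r)) * y r) * z s|
        ≤ ∫ s in (0:ℝ)..t, |(∫ r in (nfl n s)..s, (X r - X (nfl n r)) * y r) * z s| :=
          intervalIntegral.abs_integral_le_integral_abs ht0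
      _ = ∫ s in Set.Ioc (0:ℝ) t, |(∫ r in (nfl n s)..s, (X r - X (nfl n r)) * y r) * z s| :=
          intervalIntegral.integral_of_le ht0
      _ ≤ ∫ s in Set.Ioc (0:ℝ) t, G s := by
          apply integral_mono_of_nonneg (Eventually.of_forall fun s => abs_nonneg _)
            (IntegrableOn.mono_set hGint (Set.Ioc_subset_Ioc_right ht1)) hbound
      _ ≤ ∫ s in Set.Ioc (0:ℝ) 1, G s := by
          apply setIntegral_mono_set hGint (Eventually.of_forall fun s => hGnn s)
          exact (Set.Ioc_subset_Ioc_right ht1).eventuallyLE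
      _ = ∑ k ∈ Finset.range n, P k * Q k * R k := hGsum
      _ ≤ ∑ k ∈ Finset.range n, ((1:ℝ)/n) ^ 2 *
            ((A3 k) ^ ((1:ℝ)/3) * (B3 k) ^ ((1:ℝ)/3) * (C3 k) ^ ((1:ℝ)/3)) := by
          apply Finset.sum_le_sum
          intro k hk
          exact hterm k (Finset.mem_range.1 hk)
      _ = ((1:ℝ)/n) ^ 2 * ∑ k ∈ Finset.range n,
            ((A3 k) ^ ((1:ℝ)/3) * (B3 k) ^ ((1:ℝ)/3) * (C3 k) ^ ((1:ℝ)/3)) := by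
          rw [Finset.mul_sum]
      _ ≤ ((1:ℝ)/n) ^ 2 * (Sx ^ ((1:ℝ)/3) * Sy ^ ((1:ℝ)/3) * Sz ^ ((1:ℝ)/3)) := by
          apply mul_le_mul_of_nonneg_left hs3 (by positivity)
  calc (n : ℝ) ^ 2 * |∫ s in (0:ℝ)..t, (∫ r in (nfl n s)..s, (X r - X (nfl n r)) * y r) * z s|
      ≤ (n : ℝ) ^ 2 * (((1:ℝ)/n) ^ 2 * (Sx ^ ((1:ℝ)/3) * Sy ^ ((1:ℝ)/3) * Sz ^ ((1:ℝ)/3))) :=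
        mul_le_mul_of_nonneg_left hmain (by positivity)
    _ = Sx ^ ((1:ℝ)/3) * Sy ^ ((1:ℝ)/3) * Sz ^ ((1:ℝ)/3) := by
        field_simp
end

section
/- Let Y be a continuous local martingale in ℝ null at zero with C_t = [Y,Y]_t. If C_t = ∫₀ᵗ c_s ds with ∫₀¹ |c_s|³ ds < ∞ a.s., then the sequence of random variables {n² N₁ⁿ(C)}_{n≥1}, where N_t^n(C) = ∫₀ᵗ (C_s − C_{n(s)})² dC_s, satisfies sup_n n² N₁ⁿ(C) < ∞ almost surely. -/
open MeasureTheory ProbabilityTheory Filter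

/-- `M` is a continuous local martingale with respect to the filtration `ℱ` under `μ`:
it has continuous paths and there is a localizing sequence of stopping times `τ k ↑ ∞`
such that each stopped process `M^{τ k}` is a martingale. -/
def IsContLocMart {Ω : Type*} {mΩ : MeasurableSpace Ω} (ℱ : MeasureTheory.Filtration ℝ mΩ)
    (μ : MeasureTheory.Measure Ω) (M : ℝ → Ω → ℝ) : Prop :=
  (∀ ω, Continuous fun t => M t ω) ∧
    ∃ τ : ℕ → Ω → ℝ, (∀ k, MeasureTheory.IsStoppingTime ℱ (fun ω => ((τ k ω : ℝ) : WithTop ℝ))) ∧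
      (∀ ω, Filter.Tendsto (fun k => τ k ω) Filter.atTop Filter.atTop) ∧
      ∀ k, MeasureTheory.Martingale (fun t ω => M (min t (τ k ω)) ω) ℱ μ

/-- `Q` is the quadratic variation process `[M,M]` of the continuous local martingale `M`:
`Q` is continuous, nondecreasing, starts at `0`, is adapted, and `M² − Q` is a continuous
local martingale. -/
def IsQuadraticVariation {Ω : Type*} {mΩ : MeasurableSpace Ω} (ℱ : MeasureTheory.Filtration ℝ mΩ)
    (μ : MeasureTheory.Measure Ω) (M Q : ℝ → Ω → ℝ) : Prop :=
  (∀ ω, Continuous fun t => Q t ω) ∧ (∀ ω, Monotone fun t => Q t ω) ∧ (∀ ω, Q 0 ω = 0) ∧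
    MeasureTheory.Adapted ℱ (fun t ω => Q t ω) ∧
    IsContLocMart ℱ μ (fun t ω => M t ω * M t ω - Q t ω)

lemma young3 (x l : ℝ) (hx : 0 ≤ x) (hl : 0 ≤ l) : x * (3 * l ^ 2) ≤ x ^ 3 + 2 * l ^ 3 := by
  nlinarith [mul_nonneg (sq_nonneg (x - l)) (show (0:ℝ) ≤ x + 2 * l by linarith)]

lemma jensen3 {a b : ℝ} (hab : a ≤ b) (f : ℝ → ℝ)
    (h1 : IntervalIntegrable (fun s => |f s|) volume a b)
    (h3 : IntervalIntegrable (fun s => |f s| ^ 3) volume a b) :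
    (∫ s in a..b, |f s|) ^ 3 ≤ (b - a) ^ 2 * ∫ s in a..b, |f s| ^ 3 := by
  set B := ∫ s in a..b, |f s| with hB
  set G := ∫ s in a..b, |f s| ^ 3 with hG
  set L := b - a with hLdef
  have hL : 0 ≤ L := by simp [hLdef]; linarith
  have hB0 : 0 ≤ B := intervalIntegral.integral_nonneg hab (fun u _ => abs_nonneg _)
  have hG0 : 0 ≤ G := intervalIntegral.integral_nonneg hab (fun u _ => by positivity)
  have key : ∀ l : ℝ, 0 < l → B * (3 * l ^ 2) ≤ G + 2 * l ^ 3 * L := by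
    intro l hl
    have e1 : (∫ s in a..b, |f s| * (3 * l ^ 2)) = B * (3 * l ^ 2) :=
      intervalIntegral.integral_mul_const _ _
    have e2 : (∫ s in a..b, (|f s| ^ 3 + 2 * l ^ 3)) = G + 2 * l ^ 3 * L := by
      rw [intervalIntegral.integral_add h3 intervalIntegrable_const,
        intervalIntegral.integral_const]
      simp [smul_eq_mul, hLdef]; ring
    rw [← e1, ← e2]
    exact intervalIntegral.integral_mono_on hab (h1.mul_const _)
      (h3.add intervalIntegrable_const) (fun x _ => young3 _ _ (abs_nonneg _) hl.le)
  rcases eq_or_lt_of_le hL with hL0 | hLpos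
  · have hba : a = b := by simp [hLdef] at hL0; linarith
    subst hba
    simp [hB, hG]
  rcases eq_or_lt_of_le hG0 with hGz | hGpos
  · -- G = 0 forces B = 0
    have hBz : B = 0 := by
      by_contra h
      have hBpos : 0 < B := lt_of_le_of_ne hB0 (Ne.symm h)
      have := key (B / L) (div_pos hBpos hLpos)
      rw [← hGz] at this
      rw [div_pow, div_pow, zero_add] at this
      have hL2 : (0:ℝ) < L ^ 2 := by positivity
      have h' := mul_le_mul_of_nonneg_right this hL2.le
      have e1 : B * (3 * (B ^ 2 / L ^ 2)) * L ^ 2 = 3 * B ^ 3 := by field_simp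
      have e2 : 2 * (B ^ 3 / L ^ 3) * L * L ^ 2 = 2 * B ^ 3 := by field_simp
      rw [e1, e2] at h'
      nlinarith [mul_pos (mul_pos hBpos hBpos) hBpos]
    rw [hBz, ← hGz]
    norm_num
  · set l : ℝ := (G / L) ^ ((3:ℝ)⁻¹) with hl
    have hlpos : 0 < l := Real.rpow_pos_of_pos (div_pos hGpos hLpos) _
    have hl3 : l ^ 3 = G / L := by
      rw [hl, ← Real.rpow_natCast ((G / L) ^ ((3:ℝ)⁻¹)) 3,
        ← Real.rpow_mul (by positivity)]
      norm_num
    have hkey := key l hlpos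
    have hl3L : l ^ 3 * L = G := by rw [hl3]; field_simp
    have hBl : B * l ^ 2 ≤ G := by nlinarith [hkey]
    have hcube : (B * l ^ 2) ^ 3 ≤ G ^ 3 :=
      pow_le_pow_left₀ (by positivity) hBl 3
    have hl6 : (l ^ 2) ^ 3 = G ^ 2 / L ^ 2 := by
      have : (l ^ 3) ^ 2 = (G / L) ^ 2 := by rw [hl3]
      rw [div_pow] at this
      nlinarith [this]
    have h1 : B ^ 3 * (G ^ 2 / L ^ 2) ≤ G ^ 3 := by
      calc B ^ 3 * (G ^ 2 / L ^ 2) = B ^ 3 * (l ^ 2) ^ 3 := by rw [hl6]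
        _ = (B * l ^ 2) ^ 3 := by ring
        _ ≤ G ^ 3 := hcube
    have hL2 : (0:ℝ) < L ^ 2 := by positivity
    have h2 : B ^ 3 * G ^ 2 ≤ G ^ 3 * L ^ 2 := by
      have h3' := mul_le_mul_of_nonneg_right h1 hL2.le
      calc B ^ 3 * G ^ 2 = B ^ 3 * (G ^ 2 / L ^ 2) * L ^ 2 := by field_simp
        _ ≤ G ^ 3 * L ^ 2 := h3'
    have hG2p : (0:ℝ) < G ^ 2 := by positivity
    exact le_of_mul_le_mul_right (by nlinarith [h2]) hG2p


lemma nfl_nonneg {n : ℕ} {s : ℝ} (hs : 0 ≤ s) : 0 ≤ nfl n s := by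
  unfold nfl
  have : (0:ℤ) ≤ ⌊(n : ℝ) * s⌋ := Int.floor_nonneg.mpr (by positivity)
  have h2 : (0:ℝ) ≤ (⌊(n : ℝ) * s⌋ : ℝ) := by exact_mod_cast this
  positivity

lemma nfl_le {n : ℕ} (hn : 0 < n) {s : ℝ} : nfl n s ≤ s := by
  have hn' : (0:ℝ) < n := Nat.cast_pos.mpr hn
  rw [nfl, div_le_iff₀ hn']
  have := Int.floor_le ((n:ℝ) * s)
  linarith [this, mul_comm s (n:ℝ)]

lemma nfl_eq {n k : ℕ} (hn : 0 < n) {s : ℝ} (h1 : (k:ℝ)/n < s) (h2 : s < ((k:ℝ)+1)/n) :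
    nfl n s = (k:ℝ)/n := by
  have hn' : (0:ℝ) < n := Nat.cast_pos.mpr hn
  have hfl : ⌊(n:ℝ) * s⌋ = (k:ℤ) := by
    rw [Int.floor_eq_iff]
    constructor
    · rw [div_lt_iff₀ hn'] at h1
      push_cast
      nlinarith
    · rw [lt_div_iff₀ hn'] at h2
      push_cast
      nlinarith
  rw [nfl, hfl]
  push_cast
  ring

/-- Let `Y` be a continuous real local martingale null at zero with `C = [Y,Y]`.
If `C_t = ∫₀ᵗ c_s ds` with `∫₀¹ |c_s|³ ds < ∞` a.s., then, with
`N₁ⁿ(C) = ∫₀¹ (C_s − C_{n(s)})² dC_s = ∫₀¹ (C_s − C_{n(s)})² c_s ds`, one has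
`sup_n n² N₁ⁿ(C) < ∞` almost surely. -/
theorem stmt_18 {Ω : Type*} {mΩ : MeasurableSpace Ω} (μ : Measure Ω) [IsProbabilityMeasure μ]
    (ℱ : Filtration ℝ mΩ) (Y C : ℝ → Ω → ℝ) (c : ℝ → Ω → ℝ)
    (hY : IsContLocMart ℱ μ Y) (hY0 : ∀ ω, Y 0 ω = 0)
    (hC : IsQuadraticVariation ℱ μ Y C)
    (hCc : ∀ t ω, C t ω = ∫ s in (0 : ℝ)..t, c s ω)
    (hcad : Adapted ℱ (fun t ω => c t ω))
    (hc3 : ∀ᵐ ω ∂μ, IntegrableOn (fun s => |c s ω| ^ 3) (Set.Icc (0 : ℝ) 1)) :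
    ∀ᵐ ω ∂μ, ∃ K : ℝ, ∀ n : ℕ, 1 ≤ n →
      (n : ℝ) ^ 2 * (∫ s in (0 : ℝ)..1, (C s ω - C (nfl n s) ω) ^ 2 * c s ω) ≤ K := by
  obtain ⟨hCcont, hCmono, hC0, -, -⟩ := hC
  filter_upwards [hc3] with ω hω
  have hF3 : IntervalIntegrable (fun s => |c s ω| ^ 3) volume 0 1 := by
    rw [intervalIntegrable_iff_integrableOn_Ioc_of_le zero_le_one]
    exact hω.mono_set Set.Ioc_subset_Icc_self
  refine ⟨∫ s in (0:ℝ)..1, |c s ω| ^ 3, ?_⟩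
  have hK0 : 0 ≤ ∫ s in (0:ℝ)..1, |c s ω| ^ 3 :=
    intervalIntegral.integral_nonneg zero_le_one fun u _ => by positivity
  intro n hn
  have hnpos : 0 < n := hn
  have hn0 : (0:ℝ) < n := Nat.cast_pos.mpr hnpos
  by_cases hA : IntervalIntegrable (fun s => c s ω) volume 0 1
  · -- main case : c(·, ω) is integrable on [0,1]
    set a : ℕ → ℝ := fun k => (k:ℝ)/n with ha
    have ha0 : a 0 = 0 := by rw [ha]; simp
    have han : a n = 1 := by rw [ha]; exact div_self hn0.ne'
    have hamono : ∀ k, a k ≤ a (k+1) := by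
      intro k
      rw [ha]
      have hk1 : ((k:ℝ)) ≤ ((k+1:ℕ):ℝ) := by push_cast; linarith
      exact div_le_div_of_nonneg_right hk1 hn0.le
    have hrange : ∀ k, k < n → 0 ≤ a k ∧ a (k+1) ≤ 1 := by
      intro k hk
      constructor
      · rw [ha]; positivity
      · rw [ha, div_le_one hn0]
        exact_mod_cast hk
    have hsub : ∀ k, k < n → Set.uIcc (a k) (a (k+1)) ⊆ Set.uIcc (0:ℝ) 1 := by
      intro k hk
      rw [Set.uIcc_of_le (hamono k), Set.uIcc_of_le zero_le_one]
      exact Set.Icc_subset_Icc (hrange k hk).1 (hrange k hk).2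
    have hfk : ∀ k, k < n → IntervalIntegrable (fun s => c s ω) volume (a k) (a (k+1)) :=
      fun k hk => hA.mono_set (hsub k hk)
    have hf3k : ∀ k, k < n →
        IntervalIntegrable (fun s => |c s ω| ^ 3) volume (a k) (a (k+1)) :=
      fun k hk => hF3.mono_set (hsub k hk)
    have h0b : ∀ j, j ≤ n → IntervalIntegrable (fun s => c s ω) volume 0 (a j) := by
      intro j hj
      apply hA.mono_set
      rw [Set.uIcc_of_le (by rw [ha]; positivity), Set.uIcc_of_le zero_le_one]
      exact Set.Icc_subset_Icc le_rfl (by rw [ha, div_le_one hn0]; exact_mod_cast hj)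
    have hpiece : ∀ k, k < n →
        IntervalIntegrable (fun s => (C s ω - C (nfl n s) ω) ^ 2 * c s ω) volume
          (a k) (a (k+1)) ∧
        (∫ s in a k..a (k+1), (C s ω - C (nfl n s) ω) ^ 2 * c s ω) ≤
          (1/(n:ℝ)) ^ 2 * ∫ s in a k..a (k+1), |c s ω| ^ 3 := by
      intro k hk
      have hab := hamono k
      have hcont : ContinuousOn (fun s => (C s ω - C (a k) ω) ^ 2)
          (Set.uIcc (a k) (a (k+1))) :=
        (((hCcont ω).sub continuous_const).pow 2).continuousOn
      have hint1 : IntervalIntegrable (fun s => (C s ω - C (a k) ω) ^ 2 * c s ω) volume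
          (a k) (a (k+1)) := (hfk k hk).continuousOn_mul hcont
      have haeeq : ∀ᵐ s ∂(volume : Measure ℝ), s ∈ Set.uIoc (a k) (a (k+1)) →
          (C s ω - C (nfl n s) ω) ^ 2 * c s ω = (C s ω - C (a k) ω) ^ 2 * c s ω := by
        have hae : ∀ᵐ s : ℝ ∂volume, s ≠ a (k+1) := by
          refine ae_iff.mpr ?_
          simpa [not_not, Set.setOf_eq_eq_singleton] using
            Real.volume_singleton (a := a (k+1))
        filter_upwards [hae] with s hs hmem
        rw [Set.uIoc_of_le hab] at hmem
        have hlt : s < a (k+1) := lt_of_le_of_ne hmem.2 hs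
        have hnfl : nfl n s = (k:ℝ)/n := by
          refine nfl_eq hnpos ?_ ?_
          · exact hmem.1
          · rw [ha] at hlt; push_cast at hlt; exact hlt
        rw [hnfl, ha]
      have heq : (∫ s in a k..a (k+1), (C s ω - C (nfl n s) ω) ^ 2 * c s ω) =
          ∫ s in a k..a (k+1), (C s ω - C (a k) ω) ^ 2 * c s ω :=
        intervalIntegral.integral_congr_ae haeeq
      have hint0 : IntervalIntegrable (fun s => (C s ω - C (nfl n s) ω) ^ 2 * c s ω) volume
          (a k) (a (k+1)) := by
        rw [intervalIntegrable_iff] at hint1 ⊢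
        refine hint1.congr ?_
        refine (ae_restrict_iff' measurableSet_uIoc).mpr ?_
        filter_upwards [haeeq] with s h hs
        exact (h hs).symm
      refine ⟨hint0, ?_⟩
      set DK := C (a (k+1)) ω - C (a k) ω with hDKdef
      set BK := ∫ s in a k..a (k+1), |c s ω| with hBKdef
      have hD0 : 0 ≤ DK := sub_nonneg.mpr (hCmono ω hab)
      have hDint : DK = ∫ s in a k..a (k+1), c s ω := by
        rw [hDKdef, hCc (a (k+1)) ω, hCc (a k) ω]
        exact intervalIntegral.integral_interval_sub_left (h0b (k+1) hk) (h0b k hk.le)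
      have hDB : DK ≤ BK := by
        rw [hDint, hBKdef]
        exact intervalIntegral.integral_mono_on hab (hfk k hk) (hfk k hk).abs
          (fun s _ => le_abs_self _)
      have hB0 : 0 ≤ BK := intervalIntegral.integral_nonneg hab fun u _ => abs_nonneg _
      have hmono2 : (∫ s in a k..a (k+1), (C s ω - C (a k) ω) ^ 2 * c s ω) ≤ DK ^ 2 * BK := by
        have hstep := intervalIntegral.integral_mono_on hab hint1
          (((hfk k hk).abs).const_mul (DK ^ 2)) ?_
        · rwa [intervalIntegral.integral_const_mul] at hstep
        · intro s hs
          have h1 : 0 ≤ C s ω - C (a k) ω := sub_nonneg.mpr (hCmono ω hs.1)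
          have h2 : C s ω - C (a k) ω ≤ DK := sub_le_sub_right (hCmono ω hs.2) _
          calc (C s ω - C (a k) ω) ^ 2 * c s ω
              ≤ (C s ω - C (a k) ω) ^ 2 * |c s ω| :=
                mul_le_mul_of_nonneg_left (le_abs_self _) (sq_nonneg _)
            _ ≤ DK ^ 2 * |c s ω| :=
                mul_le_mul_of_nonneg_right (pow_le_pow_left₀ h1 h2 2) (abs_nonneg _)
      have hjen := jensen3 hab (fun s => c s ω) (hfk k hk).abs (hf3k k hk)
      have hlen : a (k+1) - a k = 1/(n:ℝ) := by
        rw [ha]; push_cast; field_simp; ring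
      rw [hlen] at hjen
      calc (∫ s in a k..a (k+1), (C s ω - C (nfl n s) ω) ^ 2 * c s ω)
          = ∫ s in a k..a (k+1), (C s ω - C (a k) ω) ^ 2 * c s ω := heq
        _ ≤ DK ^ 2 * BK := hmono2
        _ ≤ BK ^ 2 * BK :=
            mul_le_mul_of_nonneg_right (pow_le_pow_left₀ hD0 hDB 2) hB0
        _ = BK ^ 3 := by ring
        _ ≤ (1/(n:ℝ)) ^ 2 * ∫ s in a k..a (k+1), |c s ω| ^ 3 := hjen
    have hsumg := intervalIntegral.sum_integral_adjacent_intervals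
      (f := fun s => (C s ω - C (nfl n s) ω) ^ 2 * c s ω) (μ := volume)
      (fun k hk => (hpiece k hk).1)
    have hsum3 := intervalIntegral.sum_integral_adjacent_intervals
      (f := fun s => |c s ω| ^ 3) (μ := volume) hf3k
    rw [ha0, han] at hsumg hsum3
    have hle : (∫ s in (0:ℝ)..1, (C s ω - C (nfl n s) ω) ^ 2 * c s ω) ≤
        (1/(n:ℝ)) ^ 2 * ∫ s in (0:ℝ)..1, |c s ω| ^ 3 := by
      rw [← hsumg, ← hsum3, Finset.mul_sum]
      exact Finset.sum_le_sum fun k hk => (hpiece k (Finset.mem_range.mp hk)).2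
    have hfin : (n:ℝ) ^ 2 * ((1/(n:ℝ)) ^ 2 * ∫ s in (0:ℝ)..1, |c s ω| ^ 3) =
        ∫ s in (0:ℝ)..1, |c s ω| ^ 3 := by
      field_simp
    calc (n:ℝ) ^ 2 * (∫ s in (0:ℝ)..1, (C s ω - C (nfl n s) ω) ^ 2 * c s ω)
        ≤ (n:ℝ) ^ 2 * ((1/(n:ℝ)) ^ 2 * ∫ s in (0:ℝ)..1, |c s ω| ^ 3) :=
          mul_le_mul_of_nonneg_left hle (by positivity)
      _ = ∫ s in (0:ℝ)..1, |c s ω| ^ 3 := hfin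
  · -- degenerate case : then C vanishes on [0,1]
    have hC1 : C 1 ω = 0 := by
      rw [hCc]; exact intervalIntegral.integral_undef hA
    have hCz : ∀ t, t ∈ Set.Icc (0:ℝ) 1 → C t ω = 0 := by
      intro t ht
      have h1 : C t ω ≤ 0 := hC1 ▸ hCmono ω ht.2
      have h2 : 0 ≤ C t ω := by
        simpa [hC0 ω] using hCmono ω ht.1
      linarith
    have hzero : (∫ s in (0:ℝ)..1, (C s ω - C (nfl n s) ω) ^ 2 * c s ω) = 0 := by
      rw [intervalIntegral.integral_congr (g := fun _ => (0:ℝ)) ?_]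
      · simp
      · intro s hs
        rw [Set.uIcc_of_le zero_le_one] at hs
        have hnfl : nfl n s ∈ Set.Icc (0:ℝ) 1 :=
          ⟨nfl_nonneg hs.1, le_trans (nfl_le hnpos) hs.2⟩
        simp [hCz s hs, hCz _ hnfl]
    rw [hzero]
    simpa using hK0
end

section
/- Let C be a continuous nondecreasing adapted ℝ^{d×d}-nonnegative-matrix-valued process such that C_t − C_s is a nonnegative definite matrix for t ≥ s. Then for all n, t, and all i,j: (N_t^n(C^{ij}))² ≤ N_t^n(C^{ii}) · N_t^n(C^{jj}), where N_t^n(F) = ∫₀ᵗ (F_s − F_{n(s)})² dF_s for a function F of finite variation. -/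
open MeasureTheory Filter Finset

/-- `I` is the Riemann–Stieltjes integral `∫_a^b f dY`, defined as the limit of
left-endpoint Riemann–Stieltjes sums over uniform partitions. -/
def IsRSIntegral (f Y : ℝ → ℝ) (a b I : ℝ) : Prop :=
  Tendsto (fun m : ℕ => ∑ i ∈ Finset.range m,
      f (a + (b - a) * i / m) * (Y (a + (b - a) * (i + 1) / m) - Y (a + (b - a) * i / m)))
    atTop (nhds I)

/-- Entrywise Cauchy–Schwarz for real positive semidefinite matrices. -/
lemma psd_entry_sq {d : ℕ} (M : Matrix (Fin d) (Fin d) ℝ) (h : M.PosSemidef) (i j : Fin d) :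
    (M i j)^2 ≤ M i i * M j j := by
  have hsym : M j i = M i j := by
    have := congrFun (congrFun h.1 i) j
    simpa [Matrix.conjTranspose_apply] using this
  have hq : ∀ x : ℝ, 0 ≤ M j j * (x * x) + (2 * M i j) * x + M i i := by
    intro x
    have := h.dotProduct_mulVec_nonneg ((Pi.single i 1 : Fin d → ℝ) + x • (Pi.single j 1 : Fin d → ℝ))
    simp [Matrix.mulVec_add, Matrix.mulVec_smul, dotProduct_add, add_dotProduct,
      smul_dotProduct, dotProduct_smul, Matrix.mulVec_single,
      Pi.single_apply, smul_eq_mul, single_dotProduct, dotProduct_single,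
      hsym] at this
    nlinarith [this]
  have := discrim_le_zero hq
  rw [discrim] at this
  nlinarith [this]

/-- Diagonal entries of a real positive semidefinite matrix are nonnegative. -/
lemma psd_diag_nonneg {d : ℕ} (M : Matrix (Fin d) (Fin d) ℝ) (h : M.PosSemidef) (i : Fin d) :
    0 ≤ M i i := by
  have := h.dotProduct_mulVec_nonneg (Pi.single i 1 : Fin d → ℝ)
  simpa [Matrix.mulVec_single, dotProduct_single, Pi.single_apply] using this

/-- Let `C` be a continuous matrix-valued function such that `C_t − C_s` is positive
semidefinite for `t ≥ s`. Then for all `n ≥ 1`, `t ∈ [0,1]` and all `i, j`: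
`(N_t^n(C^{ij}))² ≤ N_t^n(C^{ii}) · N_t^n(C^{jj})`, where
`N_t^n(F) = ∫₀ᵗ (F_s − F_{n(s)})² dF_s` (a Riemann–Stieltjes integral). -/
theorem stmt_19 {d : ℕ} (C : ℝ → Matrix (Fin d) (Fin d) ℝ)
    (hcont : ∀ i j, Continuous fun t => C t i j)
    (hpsd : ∀ s t : ℝ, s ≤ t → (C t - C s).PosSemidef)
    (n : ℕ) (hn : 1 ≤ n) (t : ℝ) (ht : t ∈ Set.Icc (0 : ℝ) 1) (i j : Fin d)
    (Nij Nii Njj : ℝ)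
    (hNij : IsRSIntegral (fun s => (C s i j - C (nfl n s) i j) ^ 2) (fun s => C s i j) 0 t Nij)
    (hNii : IsRSIntegral (fun s => (C s i i - C (nfl n s) i i) ^ 2) (fun s => C s i i) 0 t Nii)
    (hNjj : IsRSIntegral (fun s => (C s j j - C (nfl n s) j j) ^ 2) (fun s => C s j j) 0 t Njj) :
    Nij ^ 2 ≤ Nii * Njj := by
  obtain ⟨ht0, ht1⟩ := ht
  -- cross-entry bounds from PSD
  have cross : ∀ {a b : ℝ}, a ≤ b →
      (C b i j - C a i j)^2 ≤ (C b i i - C a i i) * (C b j j - C a j j) := by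
    intro a b hab
    have := psd_entry_sq _ (hpsd a b hab) i j
    simpa [Matrix.sub_apply] using this
  have diagi : ∀ {a b : ℝ}, a ≤ b → 0 ≤ C b i i - C a i i := by
    intro a b hab
    have := psd_diag_nonneg _ (hpsd a b hab) i
    simpa [Matrix.sub_apply] using this
  have diagj : ∀ {a b : ℝ}, a ≤ b → 0 ≤ C b j j - C a j j := by
    intro a b hab
    have := psd_diag_nonneg _ (hpsd a b hab) j
    simpa [Matrix.sub_apply] using this
  have hnfl : ∀ {s : ℝ}, 0 ≤ s → nfl n s ≤ s := by
    intro s hs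
    have hnpos : (0:ℝ) < n := by exact_mod_cast Nat.lt_of_lt_of_le Nat.zero_lt_one hn
    rw [nfl, div_le_iff₀ hnpos]
    calc ((⌊(n:ℝ) * s⌋ : ℝ)) ≤ (n:ℝ) * s := Int.floor_le _
    _ = s * n := by ring
  -- shorthand for the Riemann sums
  unfold IsRSIntegral at hNij hNii hNjj
  set A : ℕ → ℝ := fun m => ∑ k ∈ Finset.range m,
      (fun s => (C s i j - C (nfl n s) i j) ^ 2) (0 + (t - 0) * k / m) *
        ((fun s => C s i j) (0 + (t - 0) * (k + 1) / m) -
          (fun s => C s i j) (0 + (t - 0) * k / m)) with hA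
  set B : ℕ → ℝ := fun m => ∑ k ∈ Finset.range m,
      (fun s => (C s i i - C (nfl n s) i i) ^ 2) (0 + (t - 0) * k / m) *
        ((fun s => C s i i) (0 + (t - 0) * (k + 1) / m) -
          (fun s => C s i i) (0 + (t - 0) * k / m)) with hB
  set D : ℕ → ℝ := fun m => ∑ k ∈ Finset.range m,
      (fun s => (C s j j - C (nfl n s) j j) ^ 2) (0 + (t - 0) * k / m) *
        ((fun s => C s j j) (0 + (t - 0) * (k + 1) / m) -
          (fun s => C s j j) (0 + (t - 0) * k / m)) with hD
  have key : ∀ m : ℕ, (A m)^2 ≤ B m * D m := by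
    intro m
    set u : ℕ → ℝ := fun k => 0 + (t - 0) * k / m with hu
    set v : ℕ → ℝ := fun k => 0 + (t - 0) * ((k : ℝ) + 1) / m with hv
    have h0u : ∀ k, 0 ≤ u k := by
      intro k
      have : (0:ℝ) ≤ t * k / m :=
        div_nonneg (mul_nonneg ht0 (Nat.cast_nonneg k)) (Nat.cast_nonneg m)
      simpa [hu] using this
    have huv : ∀ k, u k ≤ v k := by
      intro k
      simp only [hu, hv, zero_add, sub_zero]
      gcongr
      all_goals linarith
    -- the Cauchy–Schwarz auxiliary sequences
    set g : ℕ → ℝ := fun k =>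
      (C (u k) i i - C (nfl n (u k)) i i) * Real.sqrt (C (v k) i i - C (u k) i i) with hg
    set h : ℕ → ℝ := fun k =>
      (C (u k) j j - C (nfl n (u k)) j j) * Real.sqrt (C (v k) j j - C (u k) j j) with hh
    have hgnn : ∀ k, 0 ≤ g k := fun k =>
      mul_nonneg (diagi (hnfl (h0u k))) (Real.sqrt_nonneg _)
    have hhnn : ∀ k, 0 ≤ h k := fun k =>
      mul_nonneg (diagj (hnfl (h0u k))) (Real.sqrt_nonneg _)
    have habs : ∀ k, |(C (u k) i j - C (nfl n (u k)) i j) ^ 2 *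
        (C (v k) i j - C (u k) i j)| ≤ g k * h k := by
      intro k
      have hg1 : (C (u k) i j - C (nfl n (u k)) i j)^2 ≤
          (C (u k) i i - C (nfl n (u k)) i i) * (C (u k) j j - C (nfl n (u k)) j j) :=
        cross (hnfl (h0u k))
      have hΔ : |C (v k) i j - C (u k) i j| ≤
          Real.sqrt (C (v k) i i - C (u k) i i) * Real.sqrt (C (v k) j j - C (u k) j j) := by
        rw [← Real.sqrt_mul (diagi (huv k))]
        rw [← Real.sqrt_sq_eq_abs]
        exact Real.sqrt_le_sqrt (cross (huv k))
      rw [abs_mul, abs_pow, sq_abs]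
      calc (C (u k) i j - C (nfl n (u k)) i j)^2 * |C (v k) i j - C (u k) i j|
          ≤ ((C (u k) i i - C (nfl n (u k)) i i) * (C (u k) j j - C (nfl n (u k)) j j)) *
            (Real.sqrt (C (v k) i i - C (u k) i i) * Real.sqrt (C (v k) j j - C (u k) j j)) :=
            mul_le_mul hg1 hΔ (abs_nonneg _)
              (mul_nonneg (diagi (hnfl (h0u k))) (diagj (hnfl (h0u k))))
        _ = g k * h k := by rw [hg, hh]; ring
    have hAle : |A m| ≤ ∑ k ∈ Finset.range m, g k * h k := by
      refine (Finset.abs_sum_le_sum_abs _ _).trans ?_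
      exact Finset.sum_le_sum fun k _ => habs k
    have hCS : (∑ k ∈ Finset.range m, g k * h k)^2 ≤
        (∑ k ∈ Finset.range m, g k ^ 2) * (∑ k ∈ Finset.range m, h k ^ 2) :=
      Finset.sum_mul_sq_le_sq_mul_sq _ _ _
    have hgB : ∑ k ∈ Finset.range m, g k ^ 2 = B m := by
      refine Finset.sum_congr rfl fun k _ => ?_
      simp only [hg]
      rw [mul_pow, Real.sq_sqrt (diagi (huv k))]
    have hhD : ∑ k ∈ Finset.range m, h k ^ 2 = D m := by
      refine Finset.sum_congr rfl fun k _ => ?_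
      simp only [hh]
      rw [mul_pow, Real.sq_sqrt (diagj (huv k))]
    have hA2 : (A m)^2 ≤ (∑ k ∈ Finset.range m, g k * h k)^2 := by
      have h1 := (abs_le.mp hAle).1
      have h2 := (abs_le.mp hAle).2
      exact sq_le_sq' h1 h2
    calc (A m)^2 ≤ (∑ k ∈ Finset.range m, g k * h k)^2 := hA2
      _ ≤ (∑ k ∈ Finset.range m, g k ^ 2) * (∑ k ∈ Finset.range m, h k ^ 2) := hCS
      _ = B m * D m := by rw [hgB, hhD]
  -- pass to the limit
  have tendA : Tendsto (fun m => (A m)^2) atTop (nhds (Nij^2)) := by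
    simpa [pow_two] using hNij.mul hNij
  have tendBD : Tendsto (fun m => B m * D m) atTop (nhds (Nii * Njj)) := hNii.mul hNjj
  exact le_of_tendsto_of_tendsto' tendA tendBD key
end
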